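/- Let S = {s₁,…,s_k} be a k-element subset of {1,…,n}. Then P_S (∑_{i=1}^{k} P_{sᵢ} C_{sᵢ}) = (∑_{i=1}^{k} C_{sᵢ} P_{sᵢ}) P_S; equivalently, ∑_{i=1}^{k} [P_{S∖{sᵢ}}, C_{sᵢ}] = 0. -/

import Mathlib

/-- Product of pairwise-commuting elements `P s₁ ⋯ P s_k` over a finite index subset `S`. -/
def PS {R : Type*} [Monoid R] {n : ℕ} (P : Fin n → R)
    (hP : ∀ i j : Fin n, Commute (P i) (P j)) (S : Finset (Fin n)) : R :=
  S.noncommProd P fun i _ j _ _ => hP i j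

section Aux
variable {R : Type*} [Ring R] {n : ℕ} (P : Fin n → R) (hP : ∀ i j : Fin n, Commute (P i) (P j))

lemma PS_insert {a : Fin n} {T : Finset (Fin n)} (ha : a ∉ T) :
    PS P hP (insert a T) = P a * PS P hP T :=
  Finset.noncommProd_insert_of_notMem T a P _ ha

lemma PS_comm {x : R} {T : Finset (Fin n)} (h : ∀ j ∈ T, x * P j = P j * x) :
    x * PS P hP T = PS P hP T * x :=
  (Finset.noncommProd_commute T P _ x (fun j hj => h j hj)).eq

lemma PS_erase_mul {a : Fin n} {T : Finset (Fin n)} (ha : a ∈ T) :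
    PS P hP (T.erase a) * P a = PS P hP T :=
  Finset.noncommProd_erase_mul T ha P _

lemma mul_PS_erase {a : Fin n} {T : Finset (Fin n)} (ha : a ∈ T) :
    P a * PS P hP (T.erase a) = PS P hP T :=
  Finset.mul_noncommProd_erase T ha P _

example (T : Finset (Fin n)) (a : Fin n) : T.erase a = T.filter (· ≠ a) := (Finset.filter_ne' T a).symm
end Aux

section Aux2
variable {R : Type*} [Ring R] {n : ℕ} (P : Fin n → R) (hP : ∀ i j : Fin n, Commute (P i) (P j))
  (Am : R)

lemma PS_Am (hPPAm : ∀ i j, i ≠ j → P i * (P j * Am - Am * P j) = (P j * Am - Am * P j) * P i)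
    (T : Finset (Fin n)) :
    PS P hP T * Am - Am * PS P hP T
      = ∑ j ∈ T, PS P hP (T.erase j) * (P j * Am - Am * P j) := by
  classical
  induction T using Finset.induction_on with
  | empty =>
    have h0 : PS P hP ∅ = 1 := Finset.noncommProd_empty _ _
    rw [Finset.sum_empty, h0]; simp
  | @insert a s ha ih =>
    rw [PS_insert P hP ha, Finset.sum_insert ha, Finset.erase_insert ha]
    have hsum : ∑ j ∈ s, PS P hP ((insert a s).erase j) * (P j * Am - Am * P j)
        = ∑ j ∈ s, P a * (PS P hP (s.erase j) * (P j * Am - Am * P j)) := by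
      refine Finset.sum_congr rfl fun j hj => ?_
      have haj : a ≠ j := fun h => ha (h ▸ hj)
      rw [Finset.erase_insert_of_ne haj, PS_insert P hP (fun h => ha (Finset.mem_of_mem_erase h)),
        mul_assoc]
    have hDa : (P a * Am - Am * P a) * PS P hP s = PS P hP s * (P a * Am - Am * P a) := by
      refine (PS_comm P hP fun j hj => ?_)
      exact (hPPAm j a (fun h => ha (h ▸ hj))).symm ▸ (hPPAm j a (fun h => ha (h ▸ hj))).symm
    rw [hsum, ← Finset.mul_sum, ← ih]
    calc P a * PS P hP s * Am - Am * (P a * PS P hP s)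
        = (P a * Am - Am * P a) * PS P hP s + P a * (PS P hP s * Am - Am * PS P hP s) := by
          noncomm_ring
      _ = PS P hP s * (P a * Am - Am * P a) + P a * (PS P hP s * Am - Am * PS P hP s) := by
          rw [hDa]
end Aux2

section Aux3
variable {R : Type*} [Ring R] {n : ℕ}

lemma keyB (P : Fin n → R) (A₀ Ap Am : R)
    (hpm : Ap * Am + Am * Ap = 2 * A₀)
    (hPiA0 : ∀ i, P i * A₀ = A₀ * P i)
    (hPPAp : ∀ i j, i ≠ j → P i * (P j * Ap - Ap * P j) = (P j * Ap - Ap * P j) * P i)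
    (hPPAm : ∀ i j, i ≠ j → P i * (P j * Am - Am * P j) = (P j * Am - Am * P j) * P i)
    (i j : Fin n) (hij : i ≠ j) :
    (P j * Am - Am * P j) * (Ap * P i - P i * Ap)
      + (Ap * P i - P i * Ap) * (P j * Am - Am * P j)
      + ((P i * Am - Am * P i) * (Ap * P j - P j * Ap)
      + (Ap * P j - P j * Ap) * (P i * Am - Am * P i)) = 0 := by
  set Di := P i * Am - Am * P i with hDi
  set Dj := P j * Am - Am * P j with hDj
  set Ei := P i * Ap - Ap * P i with hEi
  set Ej := P j * Ap - Ap * P j with hEj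
  -- star identities
  have star : ∀ k : Fin n, Ap * (P k * Am - Am * P k) + (P k * Am - Am * P k) * Ap
      + Am * (P k * Ap - Ap * P k) + (P k * Ap - Ap * P k) * Am = 0 := by
    intro k
    have e : Ap * (P k * Am - Am * P k) + (P k * Am - Am * P k) * Ap
        + Am * (P k * Ap - Ap * P k) + (P k * Ap - Ap * P k) * Am
        = P k * (Ap * Am + Am * Ap) - (Ap * Am + Am * Ap) * P k := by noncomm_ring
    rw [e, hpm]
    have e2 : P k * (2 * A₀) - 2 * A₀ * P k = 2 * (P k * A₀ - A₀ * P k) := by noncomm_ring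
    rw [e2, hPiA0 k, sub_self, mul_zero]
  have hDij : P j * Di = Di * P j := hPPAm j i hij.symm
  have hEij : P j * Ei = Ei * P j := hPPAp j i hij.symm
  -- claim 1 : Di*Ej + Ej*Di = [P j, Di*Ap + Ap*Di]
  have c1 : Di * Ej + Ej * Di = P j * (Di * Ap + Ap * Di) - (Di * Ap + Ap * Di) * P j := by
    have e : Di * Ej + Ej * Di - (P j * (Di * Ap + Ap * Di) - (Di * Ap + Ap * Di) * P j)
        = (Di * P j - P j * Di) * Ap - Ap * (P j * Di - Di * P j) := by
      rw [hEj]; noncomm_ring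
    have h0 : Di * Ej + Ej * Di - (P j * (Di * Ap + Ap * Di) - (Di * Ap + Ap * Di) * P j) = 0 := by
      rw [e, hDij]; simp
    exact sub_eq_zero.mp h0
  -- claim 3 : Dj*Ei + Ei*Dj = [P j, Am*Ei + Ei*Am]
  have c3 : Dj * Ei + Ei * Dj = P j * (Am * Ei + Ei * Am) - (Am * Ei + Ei * Am) * P j := by
    have e : Dj * Ei + Ei * Dj - (P j * (Am * Ei + Ei * Am) - (Am * Ei + Ei * Am) * P j)
        = (Ei * P j - P j * Ei) * Am + Am * (Ei * P j - P j * Ei) := by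
      rw [hDj]; noncomm_ring
    have h0 : Dj * Ei + Ei * Dj - (P j * (Am * Ei + Ei * Am) - (Am * Ei + Ei * Am) * P j) = 0 := by
      rw [e, hEij]; simp
    exact sub_eq_zero.mp h0
  -- star gives Di*Ap + Ap*Di = -(Am*Ei + Ei*Am)
  have c2 : Di * Ap + Ap * Di = -(Am * Ei + Ei * Am) := by
    have := star i
    rw [← hDi, ← hEi] at this
    linear_combination (norm := noncomm_ring) this
  have main : Di * Ej + Ej * Di + (Dj * Ei + Ei * Dj) = 0 := by
    rw [c1, c3, c2]; noncomm_ring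
  -- the goal is the same thing with B = -E
  have eg : (P j * Am - Am * P j) * (Ap * P i - P i * Ap)
      + (Ap * P i - P i * Ap) * (P j * Am - Am * P j)
      + ((P i * Am - Am * P i) * (Ap * P j - P j * Ap)
      + (Ap * P j - P j * Ap) * (P i * Am - Am * P i))
      = -(Di * Ej + Ej * Di + (Dj * Ei + Ei * Dj)) := by
    rw [hDi, hDj, hEi, hEj]; noncomm_ring
  rw [eg, main, neg_zero]
end Aux3

/-- The centralizing element `C_X = ¼{A₋, [A₊, X]} − ½X` built from an involution `X`. -/
noncomputable def Cgen {R : Type*} [Ring R] [Algebra ℂ R] (Am Ap X : R) : R :=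
  (4 : ℂ)⁻¹ • (Am * (Ap * X - X * Ap) + (Ap * X - X * Ap) * Am) - (2 : ℂ)⁻¹ • X

section Aux4
variable {R : Type*} [Ring R] [Algebra ℂ R]

lemma comm_Cgen (Am Ap Q X : R) (hQX : Q * X = X * Q)
    (hQB : Q * (Ap * X - X * Ap) = (Ap * X - X * Ap) * Q) :
    Q * Cgen Am Ap X - Cgen Am Ap X * Q
      = (4 : ℂ)⁻¹ • ((Q * Am - Am * Q) * (Ap * X - X * Ap)
          + (Ap * X - X * Ap) * (Q * Am - Am * Q)) := by
  set B := Ap * X - X * Ap with hB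
  have h1 : Q * Cgen Am Ap X - Cgen Am Ap X * Q
      = (4 : ℂ)⁻¹ • (Q * (Am * B + B * Am) - (Am * B + B * Am) * Q)
        - (2 : ℂ)⁻¹ • (Q * X - X * Q) := by
    simp only [Cgen, ← hB, mul_sub, sub_mul, mul_smul_comm, smul_mul_assoc, smul_sub]
    abel
  rw [h1, hQX, sub_self, smul_zero, sub_zero]
  congr 1
  have h2 : Q * (Am * B + B * Am) - (Am * B + B * Am) * Q
      - ((Q * Am - Am * Q) * B + B * (Q * Am - Am * Q))
      = (Q * B - B * Q) * Am + Am * (Q * B - B * Q) := by noncomm_ring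
  have h3 : Q * (Am * B + B * Am) - (Am * B + B * Am) * Q
      - ((Q * Am - Am * Q) * B + B * (Q * Am - Am * Q)) = 0 := by
    rw [h2, hQB]; simp
  exact sub_eq_zero.mp h3
end Aux4

theorem stmt8
    {R : Type*} [Ring R] [Algebra ℂ R] {n : ℕ}
    (A₀ Ap Am Pb : R) (P : Fin n → R)
    (hPcomm : ∀ i j : Fin n, Commute (P i) (P j))
    (hPb : Pb = PS P hPcomm Finset.univ)
    (hPsq : Pb * Pb = 1)
    (hPA0 : Pb * A₀ = A₀ * Pb)
    (hPAp : Pb * Ap + Ap * Pb = 0)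
    (hPAm : Pb * Am + Am * Pb = 0)
    (hA0p : A₀ * Ap - Ap * A₀ = Ap)
    (hA0m : A₀ * Am - Am * A₀ = -Am)
    (hpm : Ap * Am + Am * Ap = 2 * A₀)
    (hPi2 : ∀ i, P i * P i = 1)
    (hPiA0 : ∀ i, P i * A₀ = A₀ * P i)
    (hPiBp : ∀ i, P i * (Ap * Ap) = (Ap * Ap) * P i)
    (hPiBm : ∀ i, P i * (Am * Am) = (Am * Am) * P i)
    (hPPAp : ∀ i j, i ≠ j → P i * (P j * Ap - Ap * P j) = (P j * Ap - Ap * P j) * P i)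
    (hPPAm : ∀ i j, i ≠ j → P i * (P j * Am - Am * P j) = (P j * Am - Am * P j) * P i)
    :
    ∀ S : Finset (Fin n),
      (PS P hPcomm S * ∑ s ∈ S, P s * Cgen Am Ap (P s)
        = (∑ s ∈ S, Cgen Am Ap (P s) * P s) * PS P hPcomm S) ∧
      (∑ s ∈ S, (PS P hPcomm (S.erase s) * Cgen Am Ap (P s)
          - Cgen Am Ap (P s) * PS P hPcomm (S.erase s)) = 0) := by
  classical
  have part2 : ∀ S : Finset (Fin n),
      ∑ s ∈ S, (PS P hPcomm (S.erase s) * Cgen Am Ap (P s)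
        - Cgen Am Ap (P s) * PS P hPcomm (S.erase s)) = 0 := by
    intro S
    set F : Fin n → Fin n → R := fun s j =>
      PS P hPcomm ((S.erase s).erase j) *
        ((P j * Am - Am * P j) * (Ap * P s - P s * Ap)
          + (Ap * P s - P s * Ap) * (P j * Am - Am * P j)) with hF
    -- each summand
    have step : ∀ s ∈ S,
        PS P hPcomm (S.erase s) * Cgen Am Ap (P s) - Cgen Am Ap (P s) * PS P hPcomm (S.erase s)
          = (4 : ℂ)⁻¹ • ∑ j ∈ S.erase s, F s j := by
      intro s hs
      have hQP : PS P hPcomm (S.erase s) * P s = P s * PS P hPcomm (S.erase s) :=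
        (PS_comm P hPcomm fun j _ => (hPcomm s j).eq).symm
      have hQB : PS P hPcomm (S.erase s) * (Ap * P s - P s * Ap)
          = (Ap * P s - P s * Ap) * PS P hPcomm (S.erase s) := by
        refine (PS_comm P hPcomm fun j hj => ?_).symm
        have hjs : j ≠ s := Finset.ne_of_mem_erase hj
        linear_combination (norm := noncomm_ring) hPPAp j s hjs
      rw [comm_Cgen Am Ap _ _ hQP hQB,
        PS_Am P hPcomm Am hPPAm (S.erase s)]
      congr 1
      rw [Finset.sum_mul, Finset.mul_sum, ← Finset.sum_add_distrib]
      refine Finset.sum_congr rfl fun j hj => ?_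
      have hBcomm : (Ap * P s - P s * Ap) * PS P hPcomm ((S.erase s).erase j)
          = PS P hPcomm ((S.erase s).erase j) * (Ap * P s - P s * Ap) := by
        refine PS_comm P hPcomm fun l hl => ?_
        have hls : l ≠ s := Finset.ne_of_mem_erase (Finset.mem_of_mem_erase hl)
        linear_combination (norm := noncomm_ring) hPPAp l s hls
      simp only [hF]
      have e1 : (Ap * P s - P s * Ap) * (PS P hPcomm ((S.erase s).erase j) * (P j * Am - Am * P j))
          = PS P hPcomm ((S.erase s).erase j) * ((Ap * P s - P s * Ap) * (P j * Am - Am * P j)) := by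
        rw [← mul_assoc, hBcomm, mul_assoc]
      rw [e1, mul_assoc, ← mul_add]
    -- antisymmetry
    have hsym : ∀ s j : Fin n, j ≠ s → F s j + F j s = 0 := by
      intro s j hjs
      have hswap : (S.erase j).erase s = (S.erase s).erase j := Finset.erase_right_comm
      rw [hF]
      simp only [hswap]
      rw [← mul_add]
      rw [keyB P A₀ Ap Am hpm hPiA0 hPPAp hPPAm s j (fun h => hjs h.symm), mul_zero]
    -- the double sum
    set T : R := ∑ s ∈ S, ∑ j ∈ S.erase s, F s j with hT
    have hTfilter : T = ∑ s ∈ S, ∑ j ∈ S, if j ≠ s then F s j else 0 := by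
      refine Finset.sum_congr rfl fun s _ => ?_
      rw [← Finset.filter_ne' S s, Finset.sum_filter]
    have hTswap : T = ∑ s ∈ S, ∑ j ∈ S, if s ≠ j then F j s else 0 := by
      rw [hTfilter, Finset.sum_comm]
    have hTT : T + T = 0 := by
      nth_rewrite 1 [hTfilter]
      nth_rewrite 1 [hTswap]
      rw [← Finset.sum_add_distrib]
      refine Finset.sum_eq_zero fun s _ => ?_
      rw [← Finset.sum_add_distrib]
      refine Finset.sum_eq_zero fun j _ => ?_
      by_cases h : j = s
      · subst h; simp
      · rw [if_pos (show j ≠ s from h), if_pos (show s ≠ j from fun h' => h h'.symm)]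
        exact hsym s j h
    have hT0 : T = 0 := by
      have h2 : (2 : ℂ) • T = 0 := by rw [two_smul]; exact hTT
      calc T = (2 : ℂ)⁻¹ • ((2 : ℂ) • T) := by rw [smul_smul]; norm_num
        _ = 0 := by rw [h2, smul_zero]
    calc ∑ s ∈ S, (PS P hPcomm (S.erase s) * Cgen Am Ap (P s)
            - Cgen Am Ap (P s) * PS P hPcomm (S.erase s))
        = ∑ s ∈ S, (4 : ℂ)⁻¹ • ∑ j ∈ S.erase s, F s j := Finset.sum_congr rfl step
      _ = (4 : ℂ)⁻¹ • T := by rw [hT, Finset.smul_sum]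
      _ = 0 := by rw [hT0, smul_zero]
  intro S
  refine ⟨?_, part2 S⟩
  rw [Finset.mul_sum, Finset.sum_mul]
  have hL : ∀ s ∈ S, PS P hPcomm S * (P s * Cgen Am Ap (P s))
      = PS P hPcomm (S.erase s) * Cgen Am Ap (P s) := by
    intro s hs
    rw [← PS_erase_mul P hPcomm hs, mul_assoc, ← mul_assoc (P s), hPi2 s, one_mul]
  have hR : ∀ s ∈ S, Cgen Am Ap (P s) * P s * PS P hPcomm S
      = Cgen Am Ap (P s) * PS P hPcomm (S.erase s) := by
    intro s hs
    rw [← mul_PS_erase P hPcomm hs]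
    calc Cgen Am Ap (P s) * P s * (P s * PS P hPcomm (S.erase s))
        = Cgen Am Ap (P s) * ((P s * P s) * PS P hPcomm (S.erase s)) := by noncomm_ring
      _ = Cgen Am Ap (P s) * PS P hPcomm (S.erase s) := by rw [hPi2 s, one_mul]
  rw [Finset.sum_congr rfl hL, Finset.sum_congr rfl hR]
  have := part2 S
  rw [Finset.sum_sub_distrib] at this
  exact sub_eq_zero.mp this
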